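/- arXiv:2312.10061 — 2 statements merged into one kernel-verified Lean document; each statement's English description precedes it below -/
import Mathlib

section
/- Let α ≥ 5 be rational and k ≥ 3. Suppose s₁ w̃₁ t₁ and s₂ w̃₂ t₂ are bi-infinite α-power-free words over Σ_k (s₁, s₂ left-infinite, t₁, t₂ right-infinite, w̃₁, w̃₂ finite nonempty), every finite factor of s₂ is a recurrent factor of t₁, the letter x occurs in none of s₁, s₂, t₁, t₂, and x is the first letter of w̃₂. Then there exists a finite prefix w of t₁ such that the bi-infinite word s₁ w̃₁ w w̃₂ t₂ is α-power-free. -/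
open List

/-- The concrete β-power word: `n` full copies of `r` followed by a prefix `t` of `r`. -/
def powWord {A : Type*} (r : List A) (n : ℕ) (t : List A) : List A :=
  (List.replicate n r).flatten ++ t

/-- `p` is a `β`-power `r^β` for some nonempty `r` and rational `β ≥ α`
    (here `β = |p| / |r|`). -/
def IsPowerGE {A : Type*} (α : ℚ) (p : List A) : Prop :=
  ∃ (r t : List A) (n : ℕ), r ≠ [] ∧ t <+: r ∧ p = powWord r n t ∧
    α * (r.length : ℚ) ≤ (p.length : ℚ)

/-- A finite word is `α`-power-free if no factor of it is a `β`-power with `β ≥ α`. -/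
def PowerFree {A : Type*} (α : ℚ) (w : List A) : Prop :=
  ∀ p : List A, p <:+: w → ¬ IsPowerGE α p

/-- The factor of the right-infinite word `t` of length `n` starting at position `i`. -/
def windowR {A : Type*} (t : ℕ → A) (i n : ℕ) : List A :=
  (List.range n).map fun j => t (i + j)

/-- `u` is a finite factor of the right-infinite word `t`. -/
def FactorR {A : Type*} (u : List A) (t : ℕ → A) : Prop :=
  ∃ i, u = windowR t i u.length

/-- `u` is a finite factor of the left-infinite word `s`
    (`s 0` is the last letter, `s 1` the one before it, etc.). -/
def FactorL {A : Type*} (u : List A) (s : ℕ → A) : Prop :=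
  ∃ i, u = ((List.range u.length).map fun j => s (i + j)).reverse

/-- The factor of the bi-infinite word `v` of length `n` starting at position `i`. -/
def windowZ {A : Type*} (v : ℤ → A) (i : ℤ) (n : ℕ) : List A :=
  (List.range n).map fun j => v (i + j)

/-- `p` occurs in the bi-infinite word `v` at position `i`. -/
def occursAtZ {A : Type*} (v : ℤ → A) (p : List A) (i : ℤ) : Prop :=
  p = windowZ v i p.length

/-- `u` is a finite factor of the bi-infinite word `v`. -/
def FactorZ {A : Type*} (u : List A) (v : ℤ → A) : Prop :=
  ∃ i : ℤ, u = windowZ v i u.length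

/-- A right-infinite word is `α`-power-free if no finite factor is a `β`-power, `β ≥ α`. -/
def PowerFreeR {A : Type*} (α : ℚ) (t : ℕ → A) : Prop :=
  ∀ u : List A, FactorR u t → ¬ IsPowerGE α u

/-- A left-infinite word is `α`-power-free if no finite factor is a `β`-power, `β ≥ α`. -/
def PowerFreeL {A : Type*} (α : ℚ) (s : ℕ → A) : Prop :=
  ∀ u : List A, FactorL u s → ¬ IsPowerGE α u

/-- A bi-infinite word is `α`-power-free if no finite factor is a `β`-power, `β ≥ α`. -/
def PowerFreeZ {A : Type*} (α : ℚ) (v : ℤ → A) : Prop :=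
  ∀ u : List A, FactorZ u v → ¬ IsPowerGE α u

/-- `u` is a recurrent factor of the right-infinite word `t`: it occurs at
    arbitrarily large positions. -/
def RecurrentR {A : Type*} (u : List A) (t : ℕ → A) : Prop :=
  ∀ N : ℕ, ∃ i, N ≤ i ∧ u = windowR t i u.length

/-- The bi-infinite word `s·w·t`: the left-infinite word `s` on negative positions,
    the finite word `w` on `[0, |w|)`, and the right-infinite word `t` afterwards. -/
def glue {A : Type*} (s : ℕ → A) (w : List A) (t : ℕ → A) : ℤ → A := fun i =>
  if i < 0 then s ((-i - 1).toNat)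
  else if h : i.toNat < w.length then w[i.toNat] else t (i.toNat - w.length)

/-- The left-infinite word `s·u`. -/
def appendL {A : Type*} (s : ℕ → A) (u : List A) : ℕ → A := fun n =>
  if h : n < u.length then u[u.length - 1 - n]'(by omega) else s (n - u.length)

/-- `w` occurs in the left-infinite word `s` at distance `i` from the right end:
    `w` occupies the positions `i + |w| - 1, …, i + 1, i`. -/
def occursAtL {A : Type*} (s : ℕ → A) (w : List A) (i : ℕ) : Prop :=
  w = ((List.range w.length).map fun j => s (i + j)).reverse

/-- The number of occurrences of `p` as a factor of the finite word `w`. -/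
def occur {A : Type*} [DecidableEq A] (w p : List A) : ℕ :=
  ((List.range (w.length + 1)).filter fun i => decide (p <+: w.drop i)).length

section AUX
variable {A : Type*}
lemma windowZ_eq (v : ℤ → A) (a : ℤ) (n : ℕ) :
    windowZ v a n = (List.range n).map (fun j : ℕ => v (a + (j : ℤ))) := by
  rw [windowZ]
  induction (List.range n) with
  | nil => rfl
  | cons hd tl ih => simp_all [List.flatMap_cons]

lemma windowZ_getElem? (v : ℤ → A) (a : ℤ) {n q : ℕ} (h : q < n) :
    (windowZ v a n)[q]? = some (v (a + q)) := by
  rw [windowZ_eq, List.getElem?_map, List.getElem?_range h, Option.map_some]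

lemma windowZ_congr {v v' : ℤ → A} {a a' : ℤ} {n : ℕ}
    (h : ∀ q : ℕ, q < n → v (a + q) = v' (a' + q)) :
    windowZ v a n = windowZ v' a' n := by
  rw [windowZ_eq, windowZ_eq]
  apply List.map_congr_left
  intro j hj
  exact h j (List.mem_range.mp hj)

lemma join_replicate_getElem? {r : List A} (hr : r ≠ []) :
    ∀ (N q : ℕ), q < N * r.length →
      ((List.replicate N r).flatten)[q]? = r[q % r.length]? := by
  intro N
  induction N with
  | zero => intro q h; omega
  | succ N ih =>
    intro q h
    have hrl : 0 < r.length := List.length_pos_iff.mpr hr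
    rw [List.replicate_succ, List.flatten_cons, List.getElem?_append]
    by_cases hq : q < r.length
    · rw [if_pos hq, Nat.mod_eq_of_lt hq]
    · rw [if_neg hq, ih (q - r.length) (by
        have : (N+1) * r.length = N * r.length + r.length := by ring
        omega), Nat.mod_eq_sub_mod (le_of_not_gt hq)]

lemma powWord_period {r t : List A} (n : ℕ) (ht : t <+: r) (hr : r ≠ [])
    {q : ℕ} (hq : q + r.length < (powWord r n t).length) :
    (powWord r n t)[q]? = (powWord r n t)[q + r.length]? := by
  obtain ⟨t', ht'⟩ := ht
  have hJ : powWord r n t ++ t' = (List.replicate (n+1) r).flatten := by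
    rw [powWord]
    rw [List.replicate_succ', List.flatten_append]
    simp [ht']
  have hlen : (powWord r n t).length = n * r.length + t.length := by
    simp [powWord, Nat.mul_comm]
  have hlt : t.length ≤ r.length := by rw [← ht']; simp
  have hexp : (n+1) * r.length = n * r.length + r.length := by ring
  have key : ∀ p : ℕ, p < (powWord r n t).length → (powWord r n t)[p]? = r[p % r.length]? := by
    intro p hp
    have h1 : (powWord r n t ++ t')[p]? = (powWord r n t)[p]? := by
      rw [List.getElem?_append, if_pos hp]
    rw [← h1, hJ, join_replicate_getElem? hr (n+1) p (by omega)]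
  rw [key q (by omega), key (q + r.length) hq, Nat.add_mod_right]

lemma glue_neg (s : ℕ → A) (w : List A) (t : ℕ → A) {i : ℤ} (h : i < 0) :
    glue s w t i = s (-i - 1).toNat := by
  simp only [glue]; rw [if_pos h]

lemma glue_mid (s : ℕ → A) (w : List A) (t : ℕ → A) {q : ℕ} (hq : q < w.length) :
    glue s w t (q : ℤ) = w[q] := by
  simp only [glue]
  rw [if_neg (by omega)]
  have h2 : ((q : ℤ)).toNat < w.length := by simpa using hq
  rw [dif_pos h2]
  simp

lemma glue_right' (s : ℕ → A) (w : List A) (t : ℕ → A) {i : ℤ}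
    (h0 : 0 ≤ i) (h : w.length ≤ i.toNat) :
    glue s w t i = t (i.toNat - w.length) := by
  simp only [glue]
  rw [if_neg (by omega), dif_neg (by omega)]
lemma glue_mid? (s : ℕ → A) (w : List A) (t : ℕ → A) {i : ℤ}
    (h0 : 0 ≤ i) (h : i < w.length) : some (glue s w t i) = w[i.toNat]? := by
  obtain ⟨q, rfl⟩ : ∃ q : ℕ, i = (q : ℤ) := ⟨i.toNat, by omega⟩
  simp only [Int.toNat_natCast]
  rw [glue_mid s w t (by exact_mod_cast h), List.getElem?_eq_getElem]
end AUX

/-- Proposition 2 of the paper: gluing two bi-infinite α-power-free words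
    `s₁·w̃₁·t₁` and `s₂·w̃₂·t₂` along a prefix of `t₁`, assuming every finite factor of
    `s₂` is recurrent in `t₁`, the letter `x` occurs in none of `s₁, s₂, t₁, t₂`, and
    `x` is the first letter of `w̃₂`. -/
theorem glue_powerFreeZ {A : Type*} [Fintype A] {k : ℕ} (hk : 3 ≤ k)
    (hcard : Fintype.card A = k) (α : ℚ) (hα : 5 ≤ α)
    (s₁ s₂ t₁ t₂ : ℕ → A) (w₁ w₂ : List A) (x : A)
    (hw₁ : w₁ ≠ []) (hw₂ : w₂ ≠ [])
    (h1 : PowerFreeZ α (glue s₁ w₁ t₁)) (h2 : PowerFreeZ α (glue s₂ w₂ t₂))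
    (hrec : ∀ u : List A, u ≠ [] → FactorL u s₂ → RecurrentR u t₁)
    (hx1 : ∀ n, s₁ n ≠ x) (hx2 : ∀ n, s₂ n ≠ x)
    (hx3 : ∀ n, t₁ n ≠ x) (hx4 : ∀ n, t₂ n ≠ x)
    (hhead : w₂.head? = some x) :
    ∃ m : ℕ, PowerFreeZ α (glue s₁ (w₁ ++ windowR t₁ 0 m ++ w₂) t₂) := by
  have hw₁pos : 0 < w₁.length := List.length_pos_iff.mpr hw₁
  have hw₂pos : 0 < w₂.length := List.length_pos_iff.mpr hw₂
  obtain ⟨M, hM⟩ : ∃ M : ℕ, M = max w₁.length w₂.length := ⟨_, rfl⟩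
  have hMw₁ : w₁.length ≤ M := by omega
  have hMw₂ : w₂.length ≤ M := by omega
  have hMpos : 0 < M := by omega
  -- the length-M suffix of s₂, recurrent in t₁
  set u : List A := ((List.range M).map fun j => s₂ (0 + j)).reverse with hu_def
  have hulen : u.length = M := by simp [hu_def]
  have hune : u ≠ [] := List.length_pos_iff.mp (by omega)
  obtain ⟨i₁, -, hui⟩ := hrec u hune ⟨0, by rw [hulen]⟩ 0
  rw [hulen] at hui
  -- key relation: the window of t₁ at i₁ spells the length-M suffix of s₂
  have hkey : ∀ l : ℕ, l < M → t₁ (i₁ + l) = s₂ (M - 1 - l) := by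
    intro l hl
    have h := congrArg (fun (L : List A) => L[l]?) hui
    simp only [hu_def, windowR] at h
    rw [List.getElem?_reverse (by simpa using hl)] at h
    simp only [List.length_map, List.length_range] at h
    rw [List.getElem?_map, List.getElem?_range (by omega), List.getElem?_map,
      List.getElem?_range hl, Option.map_some, Option.map_some] at h
    simpa using h.symm
  obtain ⟨m, hm⟩ : ∃ m : ℕ, m = i₁ + M := ⟨_, rfl⟩
  refine ⟨m, ?_⟩
  set W := windowR t₁ 0 m with hW_def
  have hWlen : W.length = m := by simp [hW_def, windowR]
  have hWget : ∀ q : ℕ, q < m → W[q]? = some (t₁ q) := by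
    intro q hq
    rw [hW_def, windowR, List.getElem?_map, List.getElem?_range hq, Option.map_some]
    simp
  set w : List A := w₁ ++ W ++ w₂ with hw_def
  have hwlen : w.length = w₁.length + m + w₂.length := by
    simp [hw_def, hWlen]; omega
  intro p hFac hpow
  set v := glue s₁ w t₂ with hv_def
  obtain ⟨a, hpa⟩ := hFac
  obtain ⟨r, tl, n, hrne, htl, hpw, hle⟩ := hpow
  obtain ⟨j₀, hj₀⟩ : ∃ j₀ : ℤ, j₀ = (w₁.length : ℤ) + m := ⟨_, rfl⟩
  have hrpos : 0 < r.length := List.length_pos_iff.mpr hrne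
  -- length bound
  have h5 : 5 * r.length ≤ p.length := by
    have h5q : (5:ℚ) * (r.length : ℚ) ≤ (p.length : ℚ) :=
      le_trans (mul_le_mul_of_nonneg_right hα (by positivity)) hle
    exact_mod_cast h5q
  -- values of v on the five regions
  have hVneg : ∀ i : ℤ, i < 0 → v i = s₁ (-i - 1).toNat := fun i h => glue_neg _ _ _ h
  have hVw₁ : ∀ i : ℤ, 0 ≤ i → i < w₁.length → some (v i) = w₁[i.toNat]? := by
    intro i h0 h1'
    rw [hv_def, glue_mid? s₁ w t₂ h0 (by omega), hw_def, List.getElem?_append,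
      if_pos (by simp only [List.length_append, hWlen]; omega),
      List.getElem?_append, if_pos (by omega)]
  have hVt : ∀ i : ℤ, (w₁.length : ℤ) ≤ i → i < j₀ → v i = t₁ (i.toNat - w₁.length) := by
    intro i h0 h1'
    have h := glue_mid? s₁ w t₂ (i := i) (by omega) (by omega)
    rw [hw_def, List.getElem?_append,
      if_pos (by simp only [List.length_append, hWlen]; omega),
      List.getElem?_append, if_neg (by omega),
      hWget _ (by omega)] at h
    rw [hv_def]
    exact Option.some.inj h
  have hVw₂ : ∀ i : ℤ, j₀ ≤ i → i < j₀ + w₂.length → some (v i) = w₂[(i - j₀).toNat]? := by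
    intro i h0 h1'
    rw [hv_def, glue_mid? s₁ w t₂ (by omega) (by omega), hw_def, List.getElem?_append,
      if_neg (by simp only [List.length_append, hWlen]; omega)]
    congr 1
    simp only [List.length_append, hWlen]
    omega
  have hVt₂ : ∀ i : ℤ, j₀ + w₂.length ≤ i → v i = t₂ ((i - j₀ - w₂.length).toNat) := by
    intro i h0
    rw [hv_def, glue_right' s₁ w t₂ (by omega) (by omega)]
    congr 1
    omega
  -- x sits at position j₀ and can only occur inside w₁ or w₂
  have hVj₀ : v j₀ = x := by
    have h := hVw₂ j₀ le_rfl (by omega)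
    rw [show (j₀ - j₀).toNat = 0 by omega, ← List.head?_eq_getElem?, hhead] at h
    exact Option.some.inj h
  have hVx : ∀ i : ℤ, v i = x → (0 ≤ i ∧ i < w₁.length) ∨ (j₀ ≤ i ∧ i < j₀ + w₂.length) := by
    intro i hi
    rcases lt_or_ge i 0 with h | h
    · exact absurd ((hVneg i h) ▸ hi) (hx1 _)
    rcases lt_or_ge i (w₁.length : ℤ) with h2 | h2
    · exact Or.inl ⟨h, h2⟩
    rcases lt_or_ge i j₀ with h3 | h3
    · exact absurd ((hVt i h2 h3) ▸ hi) (hx3 _)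
    rcases lt_or_ge i (j₀ + w₂.length) with h4 | h4
    · exact Or.inr ⟨h3, h4⟩
    · exact absurd ((hVt₂ i h4) ▸ hi) (hx4 _)
  -- periodicity of v on the window of p
  have hwin : ∀ q : ℕ, q < p.length → p[q]? = some (v (a + q)) := by
    intro q hq
    have h := windowZ_getElem? v a hq
    rw [← hpa] at h
    exact h
  have hperN : ∀ q : ℕ, q + r.length < p.length → v (a + q) = v (a + (q + r.length) : ℤ) := by
    intro q hq
    have h1' := powWord_period n htl hrne (q := q) (by rw [← hpw]; exact hq)
    rw [← hpw] at h1'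
    rw [hwin q (by omega), hwin (q + r.length) hq] at h1'
    exact Option.some.inj h1'
  have hperZ : ∀ b : ℤ, a ≤ b → b + r.length < a + p.length → v b = v (b + r.length) := by
    intro b hb1 hb2
    obtain ⟨q, rfl⟩ : ∃ q : ℕ, b = a + q := ⟨(b - a).toNat, by omega⟩
    have h := hperN q (by omega)
    rw [h]
    congr 1
    push_cast
    ring
  -- main case analysis
  by_cases hc1 : a + p.length ≤ j₀
  · -- p lies entirely within s₁ w₁ t₁
    refine h1 p ⟨a, hpa.trans (windowZ_congr ?_)⟩ ⟨r, tl, n, hrne, htl, hpw, hle⟩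
    intro q hq
    set i : ℤ := a + (q : ℤ) with hi_def
    have hij : i < j₀ := by omega
    rcases lt_or_ge i 0 with h | h
    · rw [hVneg i h, glue_neg s₁ w₁ t₁ h]
    rcases lt_or_ge i (w₁.length : ℤ) with h2 | h2
    · exact Option.some.inj ((hVw₁ i h h2).trans (glue_mid? s₁ w₁ t₁ h (by omega)).symm)
    · rw [hVt i h2 hij, glue_right' s₁ w₁ t₁ h (by omega)]
  by_cases hc2 : j₀ - M ≤ a
  · -- p lies entirely within s₂ w₂ t₂ (shifted by j₀)
    refine h2 p ⟨a - j₀, hpa.trans (windowZ_congr ?_)⟩ ⟨r, tl, n, hrne, htl, hpw, hle⟩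
    intro q hq
    set i : ℤ := a + (q : ℤ) with hi_def
    have hige : j₀ - M ≤ i := by omega
    rw [show a - j₀ + (q : ℤ) = i - j₀ by omega]
    rcases lt_or_ge i j₀ with h | h
    · -- inside the copied suffix of s₂ within W
      rw [hVt i (by omega) h, glue_neg s₂ w₂ t₂ (by omega)]
      have hl : i.toNat - w₁.length - i₁ < M := by omega
      rw [show i.toNat - w₁.length = i₁ + (i.toNat - w₁.length - i₁) by omega, hkey _ hl]
      congr 1
      omega
    rcases lt_or_ge i (j₀ + (w₂.length : ℤ)) with h4 | h4
    · exact Option.some.inj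
        ((hVw₂ i h h4).trans (glue_mid? s₂ w₂ t₂ (by omega) (by omega)).symm)
    · rw [hVt₂ i h4, glue_right' s₂ w₂ t₂ (by omega) (by omega)]
      congr 1
      omega
  -- crossing case: p contains position j₀ and starts before j₀ - M
  push_neg at hc1 hc2
  exfalso
  rcases le_or_gt (r.length : ℤ) M with hrM | hrM
  · -- small period: x would propagate into W
    have hb := hperZ (j₀ - r.length) (by omega) (by omega)
    rw [show j₀ - (r.length : ℤ) + r.length = j₀ by ring, hVj₀] at hb
    rw [hVt _ (by omega) (by omega)] at hb
    exact hx3 _ hb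
  · -- large period
    rcases lt_or_ge (j₀ + r.length) (a + p.length) with hd | hd
    · -- room on the right: x at j₀ + |r|, impossible
      have hb := hperZ j₀ (by omega) (by omega)
      rw [hVj₀] at hb
      rcases hVx _ hb.symm with ⟨h1', h2'⟩ | ⟨h1', h2'⟩ <;> omega
    · -- no room on the right: two x's inside w₁, too far apart
      have hb1 := hperZ (j₀ - r.length) (by omega) (by omega)
      rw [show j₀ - (r.length : ℤ) + r.length = j₀ by ring, hVj₀] at hb1
      have hb2 := hperZ (j₀ - 2 * r.length) (by omega) (by omega)
      rw [show j₀ - 2 * (r.length : ℤ) + r.length = j₀ - r.length by ring, hb1] at hb2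
      rcases hVx _ hb1 with ⟨h1', h2'⟩ | ⟨h1', h2'⟩ <;>
        rcases hVx _ hb2 with ⟨h3', h4'⟩ | ⟨h3', h4'⟩ <;> omega
end

section
/- Let α ≥ 5. Suppose s is a left-infinite α-power-free word, w, η̄, η₀ are finite words with w nonempty, the letter x is not a factor of η₀, the left-infinite word s·w·η̄·η₀ is α-power-free, |η₀| > |w·η̄|, and w occurs exactly once in s·w (i.e., occur(s·w, w) = 1 counting the suffix occurrence). Then s·w·η̄·η₀·x is α-power-free. -/
open List

lemma powWord_length {A : Type*} (r t : List A) (n : ℕ) :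
    (powWord r n t).length = n * r.length + t.length := by
  simp [powWord, List.length_flatten, List.map_replicate, List.sum_replicate, smul_eq_mul]

lemma powWord_succ {A : Type*} (r t : List A) (n : ℕ) :
    powWord r (n+1) t = r ++ powWord r n t := by
  simp [powWord, List.replicate_succ]

lemma powWord_getElem {A : Type*} {r t : List A} (ht : t <+: r) (hr : 0 < r.length) (n : ℕ) :
    ∀ k (hk : k < (powWord r n t).length),
      (powWord r n t)[k] = r[k % r.length]'(Nat.mod_lt _ hr) := by
  induction n with
  | zero =>
    intro k hk
    simp only [powWord, List.replicate_zero, List.flatten_nil, List.nil_append] at hk ⊢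
    obtain ⟨v, hv⟩ := ht
    have hkr : k < r.length := by
      have := List.IsPrefix.length_le ⟨v, hv⟩
      omega
    have hm : k % r.length = k := Nat.mod_eq_of_lt hkr
    simp only [hm]
    rw [List.getElem_of_eq hv.symm hkr, List.getElem_append_left hk]
  | succ n ih =>
    intro k hk
    rw [List.getElem_of_eq (powWord_succ r t n) hk]
    have hk' : k < (r ++ powWord r n t).length := by
      rw [← powWord_succ]; exact hk
    by_cases h : k < r.length
    · rw [List.getElem_append_left h]
      simp [Nat.mod_eq_of_lt h]
    · rw [List.getElem_append_right (le_of_not_gt h)]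
      rw [ih (k - r.length) (by simp at hk' ⊢; omega)]
      simp only [Nat.mod_eq_sub_mod (le_of_not_gt h)]

lemma appendL_append {A : Type*} (s : ℕ → A) (v u : List A) (m : ℕ) :
    appendL s (v ++ u) (u.length + m) = appendL s v m := by
  unfold appendL
  by_cases h : m < v.length
  · rw [dif_pos (by simp; omega), dif_pos h]
    have hidx : (v ++ u).length - 1 - (u.length + m) = v.length - 1 - m := by simp; omega
    simp only [hidx]
    exact List.getElem_append_left (by omega)
  · rw [dif_neg (by simp; omega), dif_neg h]
    congr 1
    simp; omega

lemma appendL_getElem {A : Type*} (s : ℕ → A) (u : List A) (m : ℕ) (h : m < u.length) :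
    appendL s u m = u[u.length - 1 - m]'(by omega) := by
  simp [appendL, h]

lemma occursAtL_of_getElem {A : Type*} {f : ℕ → A} {w : List A} {i : ℕ}
    (h : ∀ j (hj : j < w.length), f (i + j) = w[w.length - 1 - j]'(by omega)) :
    occursAtL f w i := by
  unfold occursAtL
  apply List.ext_getElem (by simp)
  intro k h1 h2
  have h2' : w.length - 1 - k < w.length := by omega
  rw [List.getElem_reverse, List.getElem_map, List.getElem_range,
    h _ (by simp at h2 ⊢; omega)]
  have : w.length - 1 - (((List.range w.length).map fun j => f (i+j)).length - 1 - k) = k := by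
    simp; omega
  simp only [this]

lemma occursAtL_self {A : Type*} (s : ℕ → A) (w : List A) :
    occursAtL (appendL s w) w 0 := by
  apply occursAtL_of_getElem
  intro j hj
  rw [zero_add, appendL_getElem s w j hj]

/-- Key step in Lemma 4 of the paper: appending a letter `x` not occurring in `η₀`
    to the α-power-free left-infinite word `s·w·η̄·η₀` keeps it α-power-free, provided
    `|η₀| > |w·η̄|` and `w` occurs exactly once in `s·w`. -/
theorem append_fresh_letter {A : Type*} (α : ℚ) (hα : 5 ≤ α)
    (s : ℕ → A) (w ηb η₀ : List A) (x : A) (hw : w ≠ [])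
    (hs : PowerFreeL α s) (hx : x ∉ η₀)
    (hpf : PowerFreeL α (appendL s (w ++ ηb ++ η₀)))
    (hlen : (w ++ ηb).length < η₀.length)
    (hocc : ∃! i : ℕ, occursAtL (appendL s w) w i) :
    PowerFreeL α (appendL s (w ++ ηb ++ η₀ ++ [x])) := by
  intro u hu hpow
  obtain ⟨r, t, n, hr, ht, hut, hαr⟩ := hpow
  obtain ⟨i, hui⟩ := hu
  set V : ℕ → A := appendL s (w ++ ηb ++ η₀ ++ [x]) with hVdef
  set L := u.length with hLdef
  set R := r.length with hRdef
  have hR : 0 < R := List.length_pos_iff.2 hr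
  have htr : t.length ≤ R := ht.length_le
  have hLval : L = n * R + t.length := by rw [hLdef, hut, powWord_length]
  have h5 : 5 * R ≤ L := by
    have h1 : (5:ℚ) * (R:ℚ) ≤ α * (R:ℚ) :=
      mul_le_mul_of_nonneg_right hα (by positivity)
    have h2 : (5:ℚ) * (R:ℚ) ≤ (L:ℚ) := h1.trans hαr
    exact_mod_cast h2
  have hlen' : w.length + ηb.length < η₀.length := by simpa using hlen
  have hw1 : 0 < w.length := List.length_pos_iff.2 hw
  rcases Nat.eq_zero_or_pos i with hi | hi
  · -- u ends at the appended letter x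
    subst hi
    -- u[k] = V (L - 1 - k)
    have hu_get : ∀ k (hk : k < L), u[k]'hk = V (L - 1 - k) := by
      intro k hk
      rw [List.getElem_of_eq hui hk]
      rw [List.getElem_reverse, List.getElem_map, List.getElem_range]
      congr 1
      simp only [List.length_reverse, List.length_map, List.length_range]
      omega
    have hu_r : ∀ k (hk : k < L), u[k]'hk = r[k % R]'(Nat.mod_lt _ hR) := by
      intro k hk
      rw [List.getElem_of_eq hut hk]
      exact powWord_getElem ht hR n k (by rw [← hut]; exact hk)
    have hVr : ∀ m (hm : m < L), V m = r[(L - 1 - m) % R]'(Nat.mod_lt _ hR) := by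
      intro m hm
      have h1 := hu_get (L - 1 - m) (by omega)
      have h2 := hu_r (L - 1 - m) (by omega)
      rw [show L - 1 - (L - 1 - m) = m by omega] at h1
      rw [← h1, h2]
    have hL5 : 5 ≤ L := by omega
    -- V 0 = x
    have hV0 : V 0 = x := by
      rw [hVdef, appendL_getElem s _ 0 (by simp)]
      have hidx : (w ++ ηb ++ η₀ ++ [x]).length - 1 - 0 = (w ++ ηb ++ η₀).length := by
        simp; omega
      simp only [hidx]
      exact List.getElem_concat_length rfl _
    -- V R = x
    have hVR : V R = x := by
      have e0 := hVr 0 (by omega)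
      have eR := hVr R (by omega)
      simp only [Nat.sub_zero] at e0
      have hmod : (L - 1 - R) % R = (L - 1) % R :=
        (Nat.mod_eq_sub_mod (by omega)).symm
      simp only [hmod] at eR
      rw [eR, ← e0, hV0]
    -- middle positions are in η₀
    have hmid : ∀ m, 1 ≤ m → m ≤ η₀.length → V m ≠ x := by
      intro m hm1 hm2
      have hmlt : m < (w ++ ηb ++ η₀ ++ [x]).length := by simp; omega
      rw [hVdef, appendL_getElem s _ m hmlt]
      have hidx : (w ++ ηb ++ η₀ ++ [x]).length - 1 - m = (w ++ ηb).length + (η₀.length - m) := by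
        simp; omega
      simp only [hidx]
      rw [List.getElem_of_eq (show w ++ ηb ++ η₀ ++ [x] = (w ++ ηb) ++ (η₀ ++ [x]) by simp)
        (by simp; omega)]
      rw [List.getElem_append_right (Nat.le_add_right _ _)]
      simp only [Nat.add_sub_cancel_left]
      rw [List.getElem_append_left (show η₀.length - m < η₀.length by omega)]
      intro hEq
      exact hx (hEq ▸ List.getElem_mem _)
    have hη₀R : η₀.length < R := by
      by_contra hcon
      push_neg at hcon
      exact hmid R hR hcon hVR
    -- translation: V (E + m) = appendL s w m
    set E := ηb.length + η₀.length + 1 with hEdef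
    have hVE : ∀ m, V (E + m) = appendL s w m := by
      intro m
      have h1 := appendL_append s w (ηb ++ η₀ ++ [x]) m
      rw [show w ++ (ηb ++ η₀ ++ [x]) = w ++ ηb ++ η₀ ++ [x] by simp] at h1
      rw [show (ηb ++ η₀ ++ [x]).length = E by simp [hEdef]; omega] at h1
      exact h1
    -- shifted occurrence of w
    have hoccR : occursAtL (appendL s w) w R := by
      apply occursAtL_of_getElem
      intro j hj
      rw [← hVE (R + j), show E + (R + j) = E + R + j by ring]
      have hb : E + R + j < L := by omega
      rw [hVr _ hb]
      have hb2 : E + j < L := by omega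
      have hmod : (L - 1 - (E + R + j)) % R = (L - 1 - (E + j)) % R := by
        rw [show L - 1 - (E + j) = (L - 1 - (E + R + j)) + R by omega]
        rw [Nat.add_mod_right]
      simp only [hmod]
      rw [← hVr _ hb2, hVE j, appendL_getElem s w j hj]
    obtain ⟨i₀, hi₀, huniq⟩ := hocc
    have e1 : 0 = i₀ := huniq 0 (occursAtL_self s w)
    have e2 : R = i₀ := huniq R hoccR
    omega
  · -- u is a factor of the shorter word: contradiction with hpf
    refine hpf u ⟨i - 1, ?_⟩ ⟨r, t, n, hr, ht, hut, hαr⟩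
    conv_lhs => rw [hui]
    congr 1
    apply List.map_congr_left
    intro j _
    have h1 := appendL_append s (w ++ ηb ++ η₀) [x] (i - 1 + j)
    rw [show [x].length + (i - 1 + j) = i + j by simp; omega] at h1
    exact h1
end
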